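/- (Discrete Poisson matching lemma.) Let $P_{X,U,Y} = P_X \circ P_{U|X} \circ P_{Y|X,U}$ be a joint pmf on finite sets $\mathcal{X} \times \mathcal{U} \times \mathcal{Y}$. Let $(T_u)_{u \in \mathcal{U}}$ be i.i.d. $\mathrm{Exp}(1)$ random variables independent of everything else. Let $X \sim P_X$, $U = \mathrm{argmin}_u\, T_u / P_{U|X}(u|X)$, $Y \mid (X,U) \sim P_{Y|X,U}$, and $\hat{U} = \mathrm{argmin}_u\, T_u / P_{U|Y}(u|Y)$ where $P_{U|Y}$ is the conditional distribution induced by $P_{X,U,Y}$. Then $(X,U,Y) \sim P_{X,U,Y}$, and almost surely $\mathbb{P}(U \neq \hat{U} \mid X, U, Y) \le 2^{\iota_{U;X}(U;X) - \iota_{U;Y}(U;Y)}$, where $\iota_{U;X}(u;x) = \log_2 \frac{P_{U|X}(u|x)}{P_U(u)}$ and $\iota_{U;Y}(u;y) = \log_2 \frac{P_{U|Y}(u|y)}{P_U(u)}$. -/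

import Mathlib

open MeasureTheory ProbabilityTheory

namespace PoissonPM

open MeasureTheory ProbabilityTheory Real Set
lemma expProb : IsProbabilityMeasure (expMeasure 1) := isProbabilityMeasure_expMeasure one_pos

lemma exp_apply {s : Set ℝ} (hs : MeasurableSet s) :
    expMeasure 1 s = ∫⁻ x in s, exponentialPDF 1 x := withDensity_apply _ hs

lemma exp_null {s : Set ℝ} (hs : volume s = 0) : expMeasure 1 s = 0 :=
  withDensity_absolutelyContinuous volume _ hs

lemma exp_Iic {x : ℝ} (hx : 0 ≤ x) :
    expMeasure 1 (Iic x) = ENNReal.ofReal (1 - exp (-x)) := by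
  rw [exp_apply measurableSet_Iic, lintegral_exponentialPDF_eq_antiDeriv one_pos, if_pos hx,
    one_mul]

lemma exp_Iic_zero : expMeasure 1 (Iic 0) = 0 := by
  rw [exp_Iic le_rfl]; simp

lemma exp_Ioi {s : ℝ} (hs : 0 ≤ s) :
    expMeasure 1 (Ioi s) = ENNReal.ofReal (exp (-s)) := by
  haveI := expProb
  have h1 : expMeasure 1 (Ioi s) = expMeasure 1 univ - expMeasure 1 (Iic s) := by
    rw [← compl_Iic]
    exact measure_compl measurableSet_Iic (measure_ne_top _ _)
  rw [h1, measure_univ, exp_Iic hs, ← ENNReal.ofReal_one, ← ENNReal.ofReal_sub _ (by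
    have : exp (-s) ≤ 1 := exp_le_one_iff.mpr (by linarith)
    linarith)]
  norm_num

lemma exp_Ici_le {s : ℝ} (hs : 0 ≤ s) :
    expMeasure 1 (Ici s) ≤ ENNReal.ofReal (exp (-s)) := by
  have : Ici s ⊆ Ioi s ∪ {s} := by
    intro x hx
    rcases eq_or_lt_of_le (mem_Ici.mp hx) with h | h
    · exact Or.inr (by simp [← h])
    · exact Or.inl h
  calc expMeasure 1 (Ici s) ≤ expMeasure 1 (Ioi s ∪ {s}) := measure_mono this
    _ ≤ expMeasure 1 (Ioi s) + expMeasure 1 {s} := measure_union_le _ _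
    _ = ENNReal.ofReal (exp (-s)) := by
        rw [exp_Ioi hs, exp_null Real.volume_singleton, add_zero]

lemma exp_Icc_le (a b : ℝ) :
    expMeasure 1 (Icc a b) ≤ ENNReal.ofReal (exp (-a)) * ENNReal.ofReal (b - a) := by
  rw [exp_apply measurableSet_Icc]
  calc ∫⁻ x in Icc a b, exponentialPDF 1 x
      ≤ ∫⁻ _ in Icc a b, ENNReal.ofReal (exp (-a)) := by
        refine setLIntegral_mono measurable_const fun x hx => ?_
        rw [exponentialPDF_eq]
        split_ifs with h
        · rw [one_mul]
          exact ENNReal.ofReal_le_ofReal (exp_le_exp.mpr (by simp; linarith [hx.1]))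
        · simp
    _ = ENNReal.ofReal (exp (-a)) * ENNReal.ofReal (b - a) := by
        rw [setLIntegral_const, Real.volume_Icc]

lemma integral_aux {r : ℝ} (hr : 0 < r) (a : ℝ) (ha : 0 < a) :
    ∫ t in Ioi (0:ℝ), t ^ (a - 1) * exp (-(r * t)) = (1/r) ^ a * Real.Gamma a :=
  integral_rpow_mul_exp_neg_mul_Ioi ha hr

lemma exp_integrable {r : ℝ} (hr : 0 < r) :
    IntegrableOn (fun t : ℝ => exp (-(r * t))) (Ioi 0) := by
  simpa [neg_mul] using exp_neg_integrableOn_Ioi 0 hr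

lemma texp_integrable {r : ℝ} (hr : 0 < r) :
    IntegrableOn (fun t : ℝ => t * exp (-(r * t))) (Ioi 0) := by
  have h2 : IntegrableOn (fun x : ℝ => exp (-x) * x ^ ((2:ℝ) - 1)) (Ioi 0) :=
    Real.GammaIntegral_convergent two_pos
  have h3 : IntegrableOn (fun x : ℝ => exp (-(r * x)) * (r * x) ^ ((2:ℝ)-1)) (Ioi 0) := by
    have := (integrableOn_Ioi_comp_mul_left_iff
      (fun x : ℝ => exp (-x) * x ^ ((2:ℝ) - 1)) 0 hr).mpr (by simpa using h2)
    simpa using this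
  have h4 : IntegrableOn (fun x : ℝ => r * (x * exp (-(r * x)))) (Ioi 0) := by
    refine h3.congr_fun (fun x hx => ?_) measurableSet_Ioi
    have hx0 : (0:ℝ) < x := hx
    dsimp only
    rw [show ((2:ℝ) - 1) = 1 by norm_num, rpow_one]
    ring
  have h5 : IntegrableOn (fun x : ℝ => r * (x * exp (-(r * x))) / r) (Ioi 0) := h4.div_const r
  refine h5.congr_fun (fun x hx => ?_) measurableSet_Ioi
  field_simp

lemma lint_exp {c : ℝ} (hc : 0 ≤ c) :
    ∫⁻ t, ENNReal.ofReal (exp (-(c * t))) ∂(expMeasure 1) = ENNReal.ofReal (1/(1+c)) := by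
  have hm : Measurable (exponentialPDF 1) :=
    (measurable_exponentialPDFReal 1).ennreal_ofReal
  have hint : Measurable fun t : ℝ => ENNReal.ofReal (exp (-(c * t))) := by
    fun_prop
  rw [show expMeasure 1 = volume.withDensity (exponentialPDF 1) from rfl,
    lintegral_withDensity_eq_lintegral_mul _ hm hint]
  simp only [Pi.mul_apply]
  have hae : ∀ᵐ t : ℝ, (exponentialPDF 1 t * ENNReal.ofReal (exp (-(c * t)))) =
      (Ioi (0:ℝ)).indicator (fun t => ENNReal.ofReal (exp (-((1+c) * t)))) t := by
    have h0 : ∀ᵐ t : ℝ ∂(volume : Measure ℝ), t ≠ 0 := by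
      rw [ae_iff]; simpa using Real.volume_singleton (a := (0:ℝ))
    filter_upwards [h0] with t ht
    rcases lt_trichotomy t 0 with h | h | h
    · rw [exponentialPDF_of_neg h, zero_mul, Set.indicator_of_notMem (show t ∉ Ioi 0 by simp [h.le])]
    · exact absurd h ht
    · rw [exponentialPDF_of_nonneg h.le, Set.indicator_of_mem (show t ∈ Ioi (0:ℝ) from h),
        ← ENNReal.ofReal_mul (by positivity)]
      congr 1
      simp only [one_mul]
      rw [← Real.exp_add]
      congr 1
      ring
  rw [lintegral_congr_ae hae, lintegral_indicator measurableSet_Ioi,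
    ← ofReal_integral_eq_lintegral_ofReal (exp_integrable (by linarith))
      (Filter.Eventually.of_forall fun x => (exp_nonneg _))]
  congr 1
  have := integral_aux (r := 1 + c) (by linarith) 1 one_pos
  simp only [sub_self, rpow_zero, one_mul, rpow_one, Real.Gamma_one, mul_one] at this
  exact this

lemma lint_texp {c : ℝ} (hc : 0 ≤ c) :
    ∫⁻ t, ENNReal.ofReal (t * exp (-(c * t))) ∂(expMeasure 1) =
      ENNReal.ofReal ((1/(1+c))^2) := by
  have hm : Measurable (exponentialPDF 1) :=
    (measurable_exponentialPDFReal 1).ennreal_ofReal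
  have hint : Measurable fun t : ℝ => ENNReal.ofReal (t * exp (-(c * t))) := by
    fun_prop
  rw [show expMeasure 1 = volume.withDensity (exponentialPDF 1) from rfl,
    lintegral_withDensity_eq_lintegral_mul _ hm hint]
  simp only [Pi.mul_apply]
  have hae : ∀ᵐ t : ℝ, (exponentialPDF 1 t * ENNReal.ofReal (t * exp (-(c * t)))) =
      (Ioi (0:ℝ)).indicator (fun t => ENNReal.ofReal (t * exp (-((1+c) * t)))) t := by
    have h0 : ∀ᵐ t : ℝ ∂(volume : Measure ℝ), t ≠ 0 := by
      rw [ae_iff]; simpa using Real.volume_singleton (a := (0:ℝ))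
    filter_upwards [h0] with t ht
    rcases lt_trichotomy t 0 with h | h | h
    · rw [exponentialPDF_of_neg h, zero_mul, Set.indicator_of_notMem (show t ∉ Ioi 0 by simp [h.le])]
    · exact absurd h ht
    · rw [exponentialPDF_of_nonneg h.le, Set.indicator_of_mem (show t ∈ Ioi (0:ℝ) from h),
        ← ENNReal.ofReal_mul (by positivity)]
      congr 1
      simp only [one_mul]
      rw [mul_left_comm, ← Real.exp_add]
      congr 2
      ring
  rw [lintegral_congr_ae hae, lintegral_indicator measurableSet_Ioi,
    ← ofReal_integral_eq_lintegral_ofReal (texp_integrable (by linarith))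
      ((ae_restrict_iff' measurableSet_Ioi).mpr (Filter.Eventually.of_forall
        fun x hx => mul_nonneg (le_of_lt hx) (exp_nonneg _)))]
  congr 1
  have := integral_aux (r := 1 + c) (by linarith) 2 two_pos
  rw [Real.Gamma_two, mul_one] at this
  rw [show ∫ t in Ioi (0:ℝ), t * exp (-((1+c) * t)) =
      ∫ t in Ioi (0:ℝ), t ^ ((2:ℝ) - 1) * exp (-((1+c) * t)) from
    setIntegral_congr_fun measurableSet_Ioi (fun x hx => by
      rw [show ((2:ℝ) - 1) = 1 by norm_num, rpow_one]), this]
  rw [show ((2:ℝ)) = ((2:ℕ):ℝ) by norm_num, rpow_natCast]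

variable {𝒰 : Type*} [Fintype 𝒰]
lemma expProb' : IsProbabilityMeasure (expMeasure 1) := isProbabilityMeasure_expMeasure one_pos

lemma pi_split [DecidableEq 𝒰] (u : 𝒰) (I : 𝒰 → ℝ → Set ℝ)
    (hI : ∀ v, MeasurableSet {p : ℝ × ℝ | p.2 ∈ I v p.1}) :
    Measure.pi (fun _ : 𝒰 => expMeasure 1) {f | ∀ v, v ≠ u → f v ∈ I v (f u)} =
      ∫⁻ t, ∏ v ∈ Finset.univ.erase u, expMeasure 1 (I v t) ∂(expMeasure 1) := by
  haveI := expProb'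
  haveI : Unique {i : 𝒰 // i = u} := ⟨⟨⟨u, rfl⟩⟩, fun x => Subtype.ext x.2⟩
  set e := MeasurableEquiv.piEquivPiSubtypeProd (fun _ : 𝒰 => ℝ) (fun i => i = u) with he
  have mp := measurePreserving_piEquivPiSubtypeProd (fun _ : 𝒰 => expMeasure 1) (fun i => i = u)
  set T : Set ((({i : 𝒰 // i = u} → ℝ)) × ({i : 𝒰 // ¬i = u} → ℝ)) :=
    {gh | ∀ w : {i : 𝒰 // ¬i = u}, gh.2 w ∈ I w.1 (gh.1 ⟨u, rfl⟩)} with hT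
  have hTmeas : MeasurableSet T := by
    have : T = ⋂ w : {i : 𝒰 // ¬i = u},
        (fun gh : (({i : 𝒰 // i = u} → ℝ)) × ({i : 𝒰 // ¬i = u} → ℝ) =>
          ((gh.1 ⟨u, rfl⟩ : ℝ), gh.2 w)) ⁻¹' {p : ℝ × ℝ | p.2 ∈ I w.1 p.1} := by
      ext gh; simp [hT]
    rw [this]
    exact MeasurableSet.iInter fun w => ((((measurable_pi_apply _).comp measurable_fst)).prodMk
      ((measurable_pi_apply _).comp measurable_snd)) (hI w.1)
  have hpre : e ⁻¹' T = {f : 𝒰 → ℝ | ∀ v, v ≠ u → f v ∈ I v (f u)} := by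
    ext f
    constructor
    · intro hf v hv
      exact hf ⟨v, hv⟩
    · intro hf w
      exact hf w.1 w.2
  rw [← hpre, mp.measure_preimage hTmeas.nullMeasurableSet]
  rw [Measure.prod_apply hTmeas]
  have hinner : ∀ g : {i : 𝒰 // i = u} → ℝ,
      (Measure.pi fun _ : {i : 𝒰 // ¬i = u} => expMeasure 1) (Prod.mk g ⁻¹' T) =
      ∏ v ∈ Finset.univ.erase u, expMeasure 1 (I v (g ⟨u, rfl⟩)) := by
    intro g
    have : Prod.mk g ⁻¹' T = Set.pi univ (fun w : {i : 𝒰 // ¬i = u} => I w.1 (g ⟨u, rfl⟩)) := by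
      ext h; simp [hT, Set.mem_pi]
    rw [this, Measure.pi_pi]
    exact (Finset.prod_subtype (Finset.univ.erase u)
      (fun x => by simp [Finset.mem_erase]) (fun v => expMeasure 1 (I v (g ⟨u, rfl⟩)))).symm
  simp_rw [hinner]
  have hF : Measurable fun t : ℝ => ∏ v ∈ Finset.univ.erase u, expMeasure 1 (I v t) := by
    refine Finset.measurable_prod _ fun v _ => ?_
    have := measurable_measure_prodMk_left (ν := expMeasure 1) (hI v)
    simpa using this
  have hcomp := (measurePreserving_funUnique (expMeasure 1) {i : 𝒰 // i = u}).lintegral_comp hF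
  rw [← hcomp]
  congr 1
  · congr 1
    exact Subsingleton.elim _ _
  · funext g
    have hg : (MeasurableEquiv.funUnique {i : 𝒰 // i = u} ℝ) g = g ⟨u, rfl⟩ :=
      congrArg g (Subsingleton.elim _ _)
    rw [hg]


lemma pi_coord_null [DecidableEq 𝒰] (v : 𝒰) :
    Measure.pi (fun _ : 𝒰 => expMeasure 1) {f : 𝒰 → ℝ | f v ≤ 0} = 0 := by
  haveI := expProb
  have : {f : 𝒰 → ℝ | f v ≤ 0} = Set.pi univ (Function.update (fun _ : 𝒰 => (univ : Set ℝ)) v (Iic 0)) := by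
    ext f
    simp only [Set.mem_pi, mem_univ, forall_true_left, mem_setOf_eq]
    constructor
    · intro h w
      rcases eq_or_ne w v with rfl | hw
      · simpa [Function.update_self] using h
      · simp [Function.update_of_ne hw]
    · intro h
      have := h v
      simpa [Function.update_self] using this
  rw [this, Measure.pi_pi]
  refine Finset.prod_eq_zero (Finset.mem_univ v) ?_
  rw [Function.update_self]
  exact exp_Iic_zero

lemma exp_ae_pos : ∀ᵐ t ∂(expMeasure 1), 0 < t := by
  rw [ae_iff]
  refine measure_mono_null (fun t ht => ?_) exp_Iic_zero
  simpa using ht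

lemma pi_race [DecidableEq 𝒰] (u : 𝒰) (a : 𝒰 → ℝ) (ha : ∀ v, 0 ≤ a v) :
    Measure.pi (fun _ : 𝒰 => expMeasure 1) {f : 𝒰 → ℝ | ∀ v, v ≠ u → f v ∈ Ioi (a v * f u)} =
      ENNReal.ofReal (1 / (1 + ∑ v ∈ Finset.univ.erase u, a v)) := by
  haveI := expProb
  rw [pi_split u (fun v t => Ioi (a v * t)) (fun v => by
    have : {p : ℝ × ℝ | p.2 ∈ Ioi (a v * p.1)} = {p : ℝ × ℝ | a v * p.1 < p.2} := rfl
    rw [this]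
    exact measurableSet_lt (measurable_fst.const_mul _) measurable_snd)]
  have hseq : ∀ᵐ t ∂(expMeasure 1),
      (∏ v ∈ Finset.univ.erase u, expMeasure 1 (Ioi (a v * t))) =
        ENNReal.ofReal (exp (-((∑ v ∈ Finset.univ.erase u, a v) * t))) := by
    filter_upwards [exp_ae_pos] with t ht
    have : ∀ v ∈ Finset.univ.erase u, expMeasure 1 (Ioi (a v * t)) =
        ENNReal.ofReal (exp (-(a v * t))) := fun v _ =>
      exp_Ioi (mul_nonneg (ha v) ht.le)
    rw [Finset.prod_congr rfl this, ← ENNReal.ofReal_prod_of_nonneg (fun v _ => exp_nonneg _),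
      ← Real.exp_sum]
    congr 1
    rw [Finset.sum_mul]
    simp [neg_mul]
  rw [lintegral_congr_ae hseq, lint_exp (Finset.sum_nonneg fun v _ => ha v)]

lemma pi_race_le [DecidableEq 𝒰] (u v0 : 𝒰) (hv0 : v0 ≠ u) (a : 𝒰 → ℝ) (ha : ∀ v, 0 ≤ a v)
    (b : ℝ) (hb : 0 ≤ b) :
    Measure.pi (fun _ : 𝒰 => expMeasure 1)
      {f : 𝒰 → ℝ | ∀ v, v ≠ u →
        f v ∈ (if v = v0 then Icc (a v * f u) (b * f u) else Ici (a v * f u))} ≤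
      ENNReal.ofReal (b * (1 / (1 + ∑ v ∈ Finset.univ.erase u, a v))^2) := by
  haveI := expProb
  set s := ∑ v ∈ Finset.univ.erase u, a v with hs
  have hs0 : 0 ≤ s := Finset.sum_nonneg fun v _ => ha v
  rw [pi_split u (fun v t => if v = v0 then Icc (a v * t) (b * t) else Ici (a v * t)) (fun v => by
    split_ifs with h
    · have : {p : ℝ × ℝ | p.2 ∈ Icc (a v * p.1) (b * p.1)} =
        {p : ℝ × ℝ | a v * p.1 ≤ p.2} ∩ {p : ℝ × ℝ | p.2 ≤ b * p.1} := by
        ext p; simp [Icc, and_comm]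
      rw [this]
      exact (measurableSet_le (measurable_fst.const_mul _) measurable_snd).inter
        (measurableSet_le measurable_snd (measurable_fst.const_mul _))
    · exact measurableSet_le (measurable_fst.const_mul _) measurable_snd)]
  have hbound : ∀ᵐ t ∂(expMeasure 1),
      (∏ v ∈ Finset.univ.erase u, expMeasure 1
        (if v = v0 then Icc (a v * t) (b * t) else Ici (a v * t))) ≤
      ENNReal.ofReal b * ENNReal.ofReal (t * exp (-(s * t))) := by
    filter_upwards [exp_ae_pos] with t ht
    have hv0' : v0 ∈ Finset.univ.erase u := Finset.mem_erase.mpr ⟨hv0, Finset.mem_univ _⟩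
    rw [← Finset.mul_prod_erase _ _ hv0', if_pos rfl]
    have h1 : expMeasure 1 (Icc (a v0 * t) (b * t)) ≤
        ENNReal.ofReal (exp (-(a v0 * t))) * ENNReal.ofReal (b * t) := by
      refine le_trans (exp_Icc_le _ _) ?_
      refine mul_le_mul_right (ENNReal.ofReal_le_ofReal ?_) _
      nlinarith [mul_nonneg (ha v0) ht.le]
    have h2 : ∀ v ∈ (Finset.univ.erase u).erase v0,
        expMeasure 1 (if v = v0 then Icc (a v * t) (b * t) else Ici (a v * t)) ≤
          ENNReal.ofReal (exp (-(a v * t))) := by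
      intro v hv
      rw [if_neg (Finset.ne_of_mem_erase hv)]
      exact exp_Ici_le (mul_nonneg (ha v) ht.le)
    calc expMeasure 1 (Icc (a v0 * t) (b * t)) *
          ∏ v ∈ (Finset.univ.erase u).erase v0, expMeasure 1
            (if v = v0 then Icc (a v * t) (b * t) else Ici (a v * t))
        ≤ (ENNReal.ofReal (exp (-(a v0 * t))) * ENNReal.ofReal (b * t)) *
            ∏ v ∈ (Finset.univ.erase u).erase v0, ENNReal.ofReal (exp (-(a v * t))) :=
          mul_le_mul' h1 (Finset.prod_le_prod' h2)
      _ = ENNReal.ofReal b * ENNReal.ofReal (t * exp (-(s * t))) := by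
          have hsum : ∑ v ∈ (Finset.univ.erase u).erase v0, -(a v * t) = -((s - a v0) * t) := by
            rw [hs, ← Finset.sum_erase_add _ _ hv0', add_sub_cancel_right, Finset.sum_mul,
              ← Finset.sum_neg_distrib]
          rw [← ENNReal.ofReal_prod_of_nonneg (fun v _ => exp_nonneg _), ← Real.exp_sum, hsum]
          rw [← ENNReal.ofReal_mul (exp_nonneg _), ← ENNReal.ofReal_mul (by positivity),
            ← ENNReal.ofReal_mul hb]
          congr 1
          rw [show rexp (-(a v0 * t)) * (b * t) * rexp (-((s - a v0) * t))
              = b * (t * (rexp (-(a v0 * t)) * rexp (-((s - a v0) * t)))) by ring,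
            ← Real.exp_add]
          congr 2
          ring
  calc ∫⁻ t, (∏ v ∈ Finset.univ.erase u, expMeasure 1
        (if v = v0 then Icc (a v * t) (b * t) else Ici (a v * t))) ∂(expMeasure 1)
      ≤ ∫⁻ t, ENNReal.ofReal b * ENNReal.ofReal (t * exp (-(s * t))) ∂(expMeasure 1) :=
        lintegral_mono_ae hbound
    _ = ENNReal.ofReal b * ENNReal.ofReal ((1/(1+s))^2) := by
        rw [lintegral_const_mul _ (by fun_prop), lint_texp hs0]
    _ = ENNReal.ofReal (b * (1/(1+s))^2) := by
        rw [← ENNReal.ofReal_mul hb]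


lemma sum_erase_eq [DecidableEq 𝒰] (u : 𝒰) (p : 𝒰 → ℝ) (hp1 : ∑ v, p v = 1) :
    ∑ v ∈ Finset.univ.erase u, p v = 1 - p u := by
  have := Finset.sum_erase_add Finset.univ p (Finset.mem_univ u)
  linarith [this.trans hp1]

lemma pi_race_prob [DecidableEq 𝒰] (u : 𝒰) (p : 𝒰 → ℝ) (hp0 : ∀ v, 0 ≤ p v)
    (hp1 : ∑ v, p v = 1) :
    Measure.pi (fun _ : 𝒰 => expMeasure 1) {f : 𝒰 → ℝ | ∀ v, v ≠ u → p v * f u < p u * f v} =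
      ENNReal.ofReal (p u) := by
  rcases eq_or_lt_of_le (hp0 u) with h0 | hpu
  · -- p u = 0
    obtain ⟨v0, hv0u, hv0⟩ : ∃ v0, v0 ≠ u ∧ 0 < p v0 := by
      by_contra hcon
      push_neg at hcon
      have : ∀ v, p v = (if v = u then p u else 0) := by
        intro v
        split_ifs with h
        · rw [h]
        · exact le_antisymm (hcon v h) (hp0 v)
      rw [Finset.sum_congr rfl (fun v _ => this v)] at hp1
      simp [← h0] at hp1
    have hsub : {f : 𝒰 → ℝ | ∀ v, v ≠ u → p v * f u < p u * f v} ⊆ {f : 𝒰 → ℝ | f u ≤ 0} := by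
      intro f hf
      have := hf v0 hv0u
      rw [← h0, zero_mul] at this
      have h2 : p v0 * f u < 0 := this
      show f u ≤ 0
      nlinarith
    have hz : ENNReal.ofReal (p u) = 0 := by simp [← h0]
    rw [hz]
    exact measure_mono_null hsub (pi_coord_null u)
  · have hset : {f : 𝒰 → ℝ | ∀ v, v ≠ u → p v * f u < p u * f v} =
        {f : 𝒰 → ℝ | ∀ v, v ≠ u → f v ∈ Ioi ((p v / p u) * f u)} := by
      ext f
      refine forall_congr' fun v => imp_congr Iff.rfl ?_
      rw [mem_Ioi, div_mul_eq_mul_div, div_lt_iff₀ hpu, mul_comm (f v)]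
    rw [hset, pi_race u _ (fun v => div_nonneg (hp0 v) hpu.le)]
    congr 1
    rw [← Finset.sum_div, sum_erase_eq u p hp1]
    field_simp
    ring
lemma pi_race_bound [DecidableEq 𝒰] (u v0 : 𝒰) (hv0 : v0 ≠ u) (p : 𝒰 → ℝ)
    (hp0 : ∀ v, 0 ≤ p v) (hp1 : ∑ v, p v = 1) (hpu : 0 < p u) (c : ℝ) (hc : 0 ≤ c) :
    Measure.pi (fun _ : 𝒰 => expMeasure 1)
      ({f : 𝒰 → ℝ | ∀ v, v ≠ u → p v * f u < p u * f v} ∩ {f : 𝒰 → ℝ | f v0 ≤ c * f u}) ≤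
      ENNReal.ofReal (c * p u ^ 2) := by
  have hsub : ({f : 𝒰 → ℝ | ∀ v, v ≠ u → p v * f u < p u * f v} ∩
      {f : 𝒰 → ℝ | f v0 ≤ c * f u}) ⊆
      {f : 𝒰 → ℝ | ∀ v, v ≠ u →
        f v ∈ (if v = v0 then Icc ((p v / p u) * f u) (c * f u)
          else Ici ((p v / p u) * f u))} := by
    rintro f ⟨hf1, hf2⟩ v hv
    have hlow : (p v / p u) * f u ≤ f v := by
      rw [div_mul_eq_mul_div, div_le_iff₀ hpu, mul_comm (f v)]
      exact (hf1 v hv).le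
    split_ifs with h
    · exact ⟨hlow, by rw [h]; exact hf2⟩
    · exact hlow
  refine le_trans (measure_mono hsub) (le_trans
    (pi_race_le u v0 hv0 (fun v => p v / p u) (fun v => div_nonneg (hp0 v) hpu.le) c hc) ?_)
  have : 1 + ∑ v ∈ Finset.univ.erase u, p v / p u = 1 / p u := by
    rw [← Finset.sum_div, sum_erase_eq u p hp1]
    field_simp
    ring
  rw [this]
  apply le_of_eq
  congr 1
  rw [one_div_one_div]

lemma ofReal_div_lt_ofReal_div {t t' c c' : ℝ} (ht : 0 < t) (ht' : 0 < t')
    (hc : 0 ≤ c) (hc' : 0 ≤ c') :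
    (ENNReal.ofReal t / ENNReal.ofReal c < ENNReal.ofReal t' / ENNReal.ofReal c') ↔
      (0 < c ∧ c' * t < c * t') := by
  rcases eq_or_lt_of_le hc with h0 | hcp
  · rw [← h0]
    simp only [ENNReal.ofReal_zero, ENNReal.div_zero (ENNReal.ofReal_pos.mpr ht).ne']
    simp [lt_irrefl]
  · rcases eq_or_lt_of_le hc' with h0' | hcp'
    · rw [← h0']
      rw [ENNReal.ofReal_zero, ENNReal.div_zero (ENNReal.ofReal_pos.mpr ht').ne']
      constructor
      · intro _
        exact ⟨hcp, by nlinarith⟩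
      · intro _
        exact ENNReal.div_lt_top ENNReal.ofReal_ne_top (ENNReal.ofReal_pos.mpr hcp).ne'
    · rw [← ENNReal.ofReal_div_of_pos hcp, ← ENNReal.ofReal_div_of_pos hcp',
        ENNReal.ofReal_lt_ofReal_iff (div_pos ht' hcp'), div_lt_div_iff₀ hcp hcp']
      constructor
      · intro h
        exact ⟨hcp, by nlinarith⟩
      · rintro ⟨_, h⟩
        nlinarith

end PoissonPM


/-- discrete Poisson matching lemma. Let
`P_{X,U,Y} = P_X ∘ P_{U|X} ∘ P_{Y|X,U}` on finite alphabets. Let `(T_u)` be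
i.i.d. `Exp(1)` independent of `X ∼ P_X` (hypothesis `hXT`: the pair
`(X, (T_u)_u)` has law `P_X ⊗ Exp(1)^𝒰`). Let `U` be the a.s. unique argmin of
`T_u / P_{U|X}(u|X)` (hypothesis `hU`, with `a/0 = ∞` via `ℝ≥0∞` division),
let `Y` be generated from `(X,U)` by `P_{Y|X,U}`, conditionally independent of
`T` (hypothesis `hY`), and let `Û` be the a.s. unique argmin of
`T_u / P_{U|Y}(u|Y)` (hypothesis `hUhat`). Then `(X,U,Y) ∼ P_{X,U,Y}` and,
almost surely (i.e. atomwise on `(X,U,Y)`),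
`ℙ(U ≠ Û | X,U,Y) ≤ 2^{ι_{U;X}(U;X) − ι_{U;Y}(U;Y)}`. -/
theorem discrete_poisson_matching_lemma
    {Ω 𝒳 𝒰 𝒴 : Type*} [MeasurableSpace Ω]
    [Fintype 𝒳] [Fintype 𝒰] [Fintype 𝒴]
    [MeasurableSpace 𝒳] [MeasurableSingletonClass 𝒳]
    [MeasurableSpace 𝒰] [MeasurableSingletonClass 𝒰]
    [MeasurableSpace 𝒴] [MeasurableSingletonClass 𝒴]
    (μ : Measure Ω) [IsProbabilityMeasure μ]
    (PX : 𝒳 → ℝ) (hPX0 : ∀ x, 0 ≤ PX x) (hPX1 : ∑ x, PX x = 1)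
    (PUX : 𝒰 → 𝒳 → ℝ) (hPUX0 : ∀ u x, 0 ≤ PUX u x) (hPUX1 : ∀ x, ∑ u, PUX u x = 1)
    (PYXU : 𝒴 → 𝒳 → 𝒰 → ℝ) (hPYXU0 : ∀ y x u, 0 ≤ PYXU y x u)
    (hPYXU1 : ∀ x u, ∑ y, PYXU y x u = 1)
    (T : 𝒰 → Ω → ℝ) (X : Ω → 𝒳) (U Uhat : Ω → 𝒰) (Y : Ω → 𝒴)
    (hTm : ∀ u, Measurable (T u)) (hXm : Measurable X) (hUm : Measurable U)
    (hUhatm : Measurable Uhat) (hYm : Measurable Y)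
    -- `X ∼ P_X` and `(T_u)_u` i.i.d. `Exp(1)`, independent of `X`:
    (hXT : ∀ (x : 𝒳) (S : Set (𝒰 → ℝ)), MeasurableSet S →
      μ ({ω | X ω = x} ∩ {ω | (fun u => T u ω) ∈ S}) =
        ENNReal.ofReal (PX x) * (Measure.pi fun _ : 𝒰 => expMeasure 1) S)
    -- `U = argmin_u T_u / P_{U|X}(u|X)` (a.s. unique argmin):
    (hU : ∀ᵐ ω ∂μ, ∀ u, u ≠ U ω →
      ENNReal.ofReal (T (U ω) ω) / ENNReal.ofReal (PUX (U ω) (X ω)) <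
        ENNReal.ofReal (T u ω) / ENNReal.ofReal (PUX u (X ω)))
    -- `Y | (X,U) ∼ P_{Y|X,U}`, conditionally independent of `T` given `(X,U)`:
    (hY : ∀ (x : 𝒳) (u : 𝒰) (y : 𝒴) (S : Set (𝒰 → ℝ)), MeasurableSet S →
      μ ({ω | Y ω = y} ∩ {ω | X ω = x ∧ U ω = u} ∩ {ω | (fun v => T v ω) ∈ S}) =
        ENNReal.ofReal (PYXU y x u) *
          μ ({ω | X ω = x ∧ U ω = u} ∩ {ω | (fun v => T v ω) ∈ S}))
    -- `Û = argmin_u T_u / P_{U|Y}(u|Y)` (a.s. unique argmin), where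
    -- `P_{U|Y}(u|y) = (∑ x, P_X x P_{U|X}(u|x) P_{Y|X,U}(y|x,u)) / P_Y y`:
    (hUhat : ∀ᵐ ω ∂μ, ∀ u, u ≠ Uhat ω →
      ENNReal.ofReal (T (Uhat ω) ω) /
          ENNReal.ofReal ((∑ x, PX x * PUX (Uhat ω) x * PYXU (Y ω) x (Uhat ω)) /
            (∑ x, ∑ u', PX x * PUX u' x * PYXU (Y ω) x u')) <
        ENNReal.ofReal (T u ω) /
          ENNReal.ofReal ((∑ x, PX x * PUX u x * PYXU (Y ω) x u) /
            (∑ x, ∑ u', PX x * PUX u' x * PYXU (Y ω) x u'))) :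
    -- conclusion 1: `(X, U, Y) ∼ P_{X,U,Y}`
    (∀ (x : 𝒳) (u : 𝒰) (y : 𝒴),
      μ {ω | X ω = x ∧ U ω = u ∧ Y ω = y} =
        ENNReal.ofReal (PX x * PUX u x * PYXU y x u))
    -- conclusion 2: `ℙ(U ≠ Û | X = x, U = u, Y = y) ≤ 2^{ι_{U;X}(u;x) − ι_{U;Y}(u;y)}`
    ∧ (∀ (x : 𝒳) (u : 𝒰) (y : 𝒴),
      μ {ω | U ω ≠ Uhat ω ∧ X ω = x ∧ U ω = u ∧ Y ω = y} ≤
        ENNReal.ofReal ((2 : ℝ) ^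
            (Real.logb 2 (PUX u x / (∑ x', PX x' * PUX u x'))
              - Real.logb 2
                (((∑ x', PX x' * PUX u x' * PYXU y x' u) /
                    (∑ x', ∑ u', PX x' * PUX u' x' * PYXU y x' u')) /
                  (∑ x', PX x' * PUX u x')))) *
          μ {ω | X ω = x ∧ U ω = u ∧ Y ω = y}) := by
  classical
  haveI := PoissonPM.expProb
  -- argmin sets
  set A : 𝒳 → 𝒰 → Set (𝒰 → ℝ) := fun x u =>
    {f | ∀ v, v ≠ u → PUX v x * f u < PUX u x * f v} with hA
  have hAm : ∀ x u, MeasurableSet (A x u) := by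
    intro x u
    have : A x u = ⋂ v, {f : 𝒰 → ℝ | v ≠ u → PUX v x * f u < PUX u x * f v} := by
      ext f; simp [hA]
    rw [this]
    refine MeasurableSet.iInter fun v => ?_
    rcases eq_or_ne v u with rfl | hv
    · simp
    · have : {f : 𝒰 → ℝ | v ≠ u → PUX v x * f u < PUX u x * f v} =
          {f : 𝒰 → ℝ | PUX v x * f u < PUX u x * f v} := by
        ext f; simp [hv]
      rw [this]
      exact measurableSet_lt ((measurable_pi_apply u).const_mul _)
        ((measurable_pi_apply v).const_mul _)
  -- a.s. positivity of T
  have hpos : ∀ᵐ ω ∂μ, ∀ v, 0 < T v ω := by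
    rw [MeasureTheory.ae_all_iff]
    intro v
    rw [ae_iff]
    have hmv : MeasurableSet {f : 𝒰 → ℝ | f v ≤ 0} :=
      measurableSet_le (measurable_pi_apply v) measurable_const
    have hsub : {ω | ¬ 0 < T v ω} ⊆
        ⋃ x : 𝒳, ({ω | X ω = x} ∩ {ω | (fun u => T u ω) ∈ {f : 𝒰 → ℝ | f v ≤ 0}}) := by
      intro ω hω
      refine Set.mem_iUnion.mpr ⟨X ω, rfl, ?_⟩
      simpa using not_lt.mp hω
    refine measure_mono_null hsub (le_antisymm (le_trans (measure_iUnion_le _) ?_) zero_le)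
    have hz : ∀ x : 𝒳, μ ({ω | X ω = x} ∩ {ω | (fun u => T u ω) ∈ {f : 𝒰 → ℝ | f v ≤ 0}}) = 0 := by
      intro x
      rw [hXT x _ hmv, PoissonPM.pi_coord_null v, mul_zero]
    simp only [hz, tsum_zero, le_refl]
  -- key pointwise characterization of U
  have key : ∀ᵐ ω ∂μ, ∀ x u, (X ω = x ∧ U ω = u) ↔ (X ω = x ∧ (fun v => T v ω) ∈ A x u) := by
    filter_upwards [hpos, hU] with ω hp hu
    intro x u
    constructor
    · rintro ⟨hx, huu⟩
      refine ⟨hx, fun v hv => ?_⟩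
      have := hu v (by rw [huu]; exact hv)
      rw [huu, hx] at this
      exact ((PoissonPM.ofReal_div_lt_ofReal_div (hp u) (hp v)
        (hPUX0 u x) (hPUX0 v x)).mp this).2
    · rintro ⟨hx, hf⟩
      refine ⟨hx, ?_⟩
      by_contra hne
      have h1 := hu u (Ne.symm hne)
      rw [hx] at h1
      have h2 := ((PoissonPM.ofReal_div_lt_ofReal_div (hp (U ω)) (hp u)
        (hPUX0 (U ω) x) (hPUX0 u x)).mp h1).2
      have h3 := hf (U ω) hne
      exact absurd h2 (not_lt.mpr h3.le)
  -- measure of {X = x, U = u}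
  have hXU : ∀ x u, μ {ω | X ω = x ∧ U ω = u} =
      ENNReal.ofReal (PX x) * ENNReal.ofReal (PUX u x) := by
    intro x u
    have hae : ({ω | X ω = x ∧ U ω = u} : Set Ω) =ᵐ[μ]
        ({ω | X ω = x} ∩ {ω | (fun v => T v ω) ∈ A x u} : Set Ω) := by
      refine Filter.eventuallyEq_set.mpr ?_
      filter_upwards [key] with ω hk
      simp only [Set.mem_inter_iff, Set.mem_setOf_eq]
      exact hk x u
    rw [measure_congr hae, hXT x (A x u) (hAm x u),
      PoissonPM.pi_race_prob u (fun v => PUX v x) (fun v => hPUX0 v x) (hPUX1 x)]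
  -- conclusion 1
  have conc1 : ∀ (x : 𝒳) (u : 𝒰) (y : 𝒴),
      μ {ω | X ω = x ∧ U ω = u ∧ Y ω = y} =
        ENNReal.ofReal (PX x * PUX u x * PYXU y x u) := by
    intro x u y
    have h1 : {ω | X ω = x ∧ U ω = u ∧ Y ω = y} =
        {ω | Y ω = y} ∩ {ω | X ω = x ∧ U ω = u} ∩
          {ω | (fun v => T v ω) ∈ (Set.univ : Set (𝒰 → ℝ))} := by
      ext ω
      simp only [Set.mem_setOf_eq, Set.mem_inter_iff, Set.mem_univ]
      tauto
    rw [h1, hY x u y Set.univ MeasurableSet.univ]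
    have h2 : {ω | X ω = x ∧ U ω = u} ∩
        {ω | (fun v => T v ω) ∈ (Set.univ : Set (𝒰 → ℝ))} = {ω | X ω = x ∧ U ω = u} := by
      simp
    rw [h2, hXU x u, ← ENNReal.ofReal_mul (hPX0 x), ← ENNReal.ofReal_mul (hPYXU0 y x u)]
    congr 1
    ring
  refine ⟨conc1, ?_⟩
  -- conclusion 2
  intro x u y
  by_cases hnd : 0 < PX x ∧ 0 < PUX u x ∧ 0 < PYXU y x u
  swap
  · -- degenerate case
    have hprod : PX x * PUX u x * PYXU y x u = 0 := by
      rcases le_or_gt (PX x) 0 with h | h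
      · rw [le_antisymm h (hPX0 x)]; ring
      rcases le_or_gt (PUX u x) 0 with h2 | h2
      · rw [le_antisymm h2 (hPUX0 u x)]; ring
      rcases le_or_gt (PYXU y x u) 0 with h3 | h3
      · rw [le_antisymm h3 (hPYXU0 y x u)]; ring
      exact absurd ⟨h, h2, h3⟩ hnd
    have h0 : μ {ω | U ω ≠ Uhat ω ∧ X ω = x ∧ U ω = u ∧ Y ω = y} = 0 := by
      have hmono : μ {ω | U ω ≠ Uhat ω ∧ X ω = x ∧ U ω = u ∧ Y ω = y} ≤
          μ {ω | X ω = x ∧ U ω = u ∧ Y ω = y} := measure_mono fun ω hω => hω.2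
      refine le_antisymm (le_trans hmono ?_) zero_le
      rw [conc1 x u y, hprod]
      simp
    rw [h0]
    exact zero_le
  obtain ⟨hpx, hpu, hpy⟩ := hnd
  set qnum : 𝒰 → ℝ := fun v => ∑ x', PX x' * PUX v x' * PYXU y x' v with hqnum
  set qden : ℝ := ∑ x', ∑ u', PX x' * PUX u' x' * PYXU y x' u' with hqden
  have hqnum0 : ∀ v, 0 ≤ qnum v := fun v => Finset.sum_nonneg fun x' _ =>
    mul_nonneg (mul_nonneg (hPX0 x') (hPUX0 v x')) (hPYXU0 y x' v)
  have hqnumu : 0 < qnum u := by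
    refine lt_of_lt_of_le ?_ (Finset.single_le_sum (f := fun x' =>
      PX x' * PUX u x' * PYXU y x' u)
      (fun x' _ => mul_nonneg (mul_nonneg (hPX0 x') (hPUX0 u x')) (hPYXU0 y x' u))
      (Finset.mem_univ x))
    positivity
  have hqden_sum : qden = ∑ v, qnum v := Finset.sum_comm
  have hqden0 : 0 < qden := by
    rw [hqden_sum]
    exact lt_of_lt_of_le hqnumu (Finset.single_le_sum (fun v _ => hqnum0 v) (Finset.mem_univ u))
  set PU : ℝ := ∑ x', PX x' * PUX u x' with hPU
  have hPU0 : 0 < PU := by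
    refine lt_of_lt_of_le ?_ (Finset.single_le_sum (f := fun x' => PX x' * PUX u x')
      (fun x' _ => mul_nonneg (hPX0 x') (hPUX0 u x')) (Finset.mem_univ x))
    positivity
  -- the constant
  have hc2 : (2 : ℝ) ^ (Real.logb 2 (PUX u x / PU) - Real.logb 2 ((qnum u / qden) / PU)) =
      PUX u x * qden / qnum u := by
    rw [Real.rpow_sub two_pos, Real.rpow_logb two_pos (by norm_num)
      (div_pos hpu hPU0), Real.rpow_logb two_pos (by norm_num)
      (div_pos (div_pos hqnumu hqden0) hPU0)]
    field_simp
  -- the union bound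
  set Bv : 𝒰 → Set (𝒰 → ℝ) := fun v => {f | f v ≤ (qnum v / qnum u) * f u} with hBv
  have hBvm : ∀ v, MeasurableSet (Bv v) :=
    fun v => measurableSet_le (measurable_pi_apply v) ((measurable_pi_apply u).const_mul _)
  obtain ⟨bad, hbad0, hbadP⟩ : ∃ bad : Set Ω, μ bad = 0 ∧ ∀ ω, ω ∉ bad →
      ((∀ v, 0 < T v ω) ∧
        (∀ x' u', (X ω = x' ∧ U ω = u') ↔ (X ω = x' ∧ (fun v => T v ω) ∈ A x' u')) ∧
        (∀ u', u' ≠ Uhat ω →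
          ENNReal.ofReal (T (Uhat ω) ω) /
              ENNReal.ofReal ((∑ x'', PX x'' * PUX (Uhat ω) x'' * PYXU (Y ω) x'' (Uhat ω)) /
                (∑ x'', ∑ u'', PX x'' * PUX u'' x'' * PYXU (Y ω) x'' u'')) <
            ENNReal.ofReal (T u' ω) /
              ENNReal.ofReal ((∑ x'', PX x'' * PUX u' x'' * PYXU (Y ω) x'' u') /
                (∑ x'', ∑ u'', PX x'' * PUX u'' x'' * PYXU (Y ω) x'' u'')))) := by
    have hall := hpos.and (key.and hUhat)
    exact ⟨_, ae_iff.mp hall, fun ω hω => not_not.mp hω⟩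
  have hsub : {ω | U ω ≠ Uhat ω ∧ X ω = x ∧ U ω = u ∧ Y ω = y} ⊆
      (⋃ v ∈ Finset.univ.erase u, ({ω | Y ω = y} ∩ {ω | X ω = x ∧ U ω = u} ∩
        {ω | (fun w => T w ω) ∈ A x u ∩ Bv v})) ∪ bad := by
    rintro ω ⟨hne, hx, hu, hy⟩
    by_cases hωb : ω ∈ bad
    · exact Or.inr hωb
    refine Or.inl ?_
    obtain ⟨hp, hk, hh⟩ := hbadP ω hωb
    have hfA : (fun v => T v ω) ∈ A x u := ((hk x u).mp ⟨hx, hu⟩).2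
    set v := Uhat ω with hv
    have hvu : v ≠ u := by rw [hv, ← hu]; exact fun h => hne h.symm
    have h1 := hh u (Ne.symm hvu)
    rw [hy] at h1
    have h2 := (PoissonPM.ofReal_div_lt_ofReal_div (hp v) (hp u)
      (div_nonneg (hqnum0 v) hqden0.le) (div_nonneg (hqnum0 u) hqden0.le)).mp h1
    have h3 : qnum u * T v ω < qnum v * T u ω := by
      have := h2.2
      rw [div_mul_eq_mul_div, div_mul_eq_mul_div, div_lt_div_iff₀ hqden0 hqden0] at this
      nlinarith
    have hfB : (fun w => T w ω) ∈ Bv v := by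
      show T v ω ≤ (qnum v / qnum u) * T u ω
      rw [div_mul_eq_mul_div, le_div_iff₀ hqnumu]
      nlinarith
    refine Set.mem_biUnion (Finset.mem_erase.mpr ⟨hvu, Finset.mem_univ v⟩) ?_
    exact ⟨⟨hy, hx, hu⟩, hfA, hfB⟩
  have haemem : ∀ᵐ ω ∂μ, ω ∉ bad := by
    rw [ae_iff]
    have hbb : {ω | ¬ ω ∉ bad} = bad := by ext ω; simp
    rw [hbb]
    exact hbad0
  have hterm : ∀ v ∈ Finset.univ.erase u,
      μ ({ω | Y ω = y} ∩ {ω | X ω = x ∧ U ω = u} ∩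
        {ω | (fun w => T w ω) ∈ A x u ∩ Bv v}) ≤
      ENNReal.ofReal (PYXU y x u * (PX x * ((qnum v / qnum u) * PUX u x ^ 2))) := by
    intro v hv
    rw [hY x u y _ ((hAm x u).inter (hBvm v))]
    have hae2 : ({ω | X ω = x ∧ U ω = u} ∩ {ω | (fun w => T w ω) ∈ A x u ∩ Bv v} : Set Ω) =ᵐ[μ]
        ({ω | X ω = x} ∩ {ω | (fun w => T w ω) ∈ A x u ∩ Bv v} : Set Ω) := by
      refine Filter.eventuallyEq_set.mpr ?_
      filter_upwards [haemem] with ω hω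
      obtain ⟨hp, hk, _⟩ := hbadP ω hω
      simp only [Set.mem_inter_iff, Set.mem_setOf_eq]
      constructor
      · rintro ⟨⟨h1, h2⟩, h3⟩
        exact ⟨h1, h3⟩
      · rintro ⟨h1, h3⟩
        exact ⟨(hk x u).mpr ⟨h1, h3.1⟩, h3⟩
    rw [measure_congr hae2, hXT x _ ((hAm x u).inter (hBvm v))]
    have hrace := PoissonPM.pi_race_bound u v (Finset.ne_of_mem_erase hv)
      (fun w => PUX w x) (fun w => hPUX0 w x) (hPUX1 x) hpu
      (qnum v / qnum u) (div_nonneg (hqnum0 v) hqnumu.le)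
    have hAB : (A x u ∩ Bv v : Set (𝒰 → ℝ)) =
        ({f : 𝒰 → ℝ | ∀ w, w ≠ u → PUX w x * f u < PUX u x * f w} ∩
          {f : 𝒰 → ℝ | f v ≤ qnum v / qnum u * f u}) := rfl
    rw [hAB]
    calc ENNReal.ofReal (PYXU y x u) * (ENNReal.ofReal (PX x) *
          (Measure.pi fun _ : 𝒰 => expMeasure 1)
            ({f : 𝒰 → ℝ | ∀ w, w ≠ u → PUX w x * f u < PUX u x * f w} ∩
              {f : 𝒰 → ℝ | f v ≤ qnum v / qnum u * f u}))
        ≤ ENNReal.ofReal (PYXU y x u) * (ENNReal.ofReal (PX x) *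
            ENNReal.ofReal ((qnum v / qnum u) * PUX u x ^ 2)) := by
          exact mul_le_mul_right (mul_le_mul_right hrace _) _
      _ = ENNReal.ofReal (PYXU y x u * (PX x * ((qnum v / qnum u) * PUX u x ^ 2))) := by
          rw [← ENNReal.ofReal_mul (hPX0 x), ← ENNReal.ofReal_mul (hPYXU0 y x u)]
  -- put it together
  have hfinal : μ {ω | U ω ≠ Uhat ω ∧ X ω = x ∧ U ω = u ∧ Y ω = y} ≤
      ENNReal.ofReal (∑ v ∈ Finset.univ.erase u,
        PYXU y x u * (PX x * ((qnum v / qnum u) * PUX u x ^ 2))) := by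
    refine le_trans (measure_mono hsub) (le_trans (measure_union_le _ _) ?_)
    rw [hbad0, add_zero]
    refine le_trans (measure_biUnion_finset_le _ _) ?_
    rw [ENNReal.ofReal_sum_of_nonneg (fun v _ => mul_nonneg (hPYXU0 y x u)
      (mul_nonneg (hPX0 x) (mul_nonneg (div_nonneg (hqnum0 v) hqnumu.le) (sq_nonneg _))))]
    exact Finset.sum_le_sum hterm
  refine le_trans hfinal ?_
  rw [conc1 x u y]
  show ENNReal.ofReal _ ≤
    ENNReal.ofReal ((2 : ℝ) ^ (Real.logb 2 (PUX u x / PU) -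
      Real.logb 2 ((qnum u / qden) / PU))) * ENNReal.ofReal (PX x * PUX u x * PYXU y x u)
  rw [hc2, ← ENNReal.ofReal_mul (by positivity)]
  refine ENNReal.ofReal_le_ofReal ?_
  have hsum2 : ∑ v ∈ Finset.univ.erase u, qnum v = qden - qnum u := by
    have h := Finset.sum_erase_add Finset.univ qnum (Finset.mem_univ u)
    rw [← hqden_sum] at h
    linarith
  have hexpand : (∑ v ∈ Finset.univ.erase u,
      PYXU y x u * (PX x * (qnum v / qnum u * PUX u x ^ 2)))
      = PYXU y x u * PX x * PUX u x ^ 2 / qnum u * (qden - qnum u) := by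
    rw [← hsum2, Finset.mul_sum]
    refine Finset.sum_congr rfl fun v _ => ?_
    field_simp
  rw [hexpand]
  have hF : 0 ≤ PYXU y x u * PX x * PUX u x ^ 2 / qnum u := by positivity
  have hEq : (PUX u x * qden / qnum u) * (PX x * PUX u x * PYXU y x u) =
      PYXU y x u * PX x * PUX u x ^ 2 / qnum u * qden := by
    field_simp
  rw [hEq]
  exact mul_le_mul_of_nonneg_left (sub_le_self _ hqnumu.le) hF
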